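/- Let f be a linear skew-shift of T² and let Φ : T² → ℝ be continuous with minimum Φ̲ > 0 and maximum Φ̄. Fix t > 0, x ∈ T and a closed arc [a,b] ⊆ T, and set I = {x}×[a,b], n̲_t(I) := min_{y∈[a,b]} n_t(x,y), n̄_t(I) := max_{y∈[a,b]} n_t(x,y), and ΔΦ_n(I) := max_{y∈[a,b]} Φ_n(x,y) − min_{y∈[a,b]} Φ_n(x,y). Then ΔΦ_{n̲_t(I)}(I)/Φ̄ − Φ̄/Φ̲ ≤ n̄_t(I) − n̲_t(I) ≤ ΔΦ_{n̲_t(I)}(I)/Φ̲ + Φ̄/Φ̲. -/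

import Mathlib

open MeasureTheory Filter

noncomputable section

abbrev T1 : Type := UnitAddCircle
abbrev T2 : Type := UnitAddCircle × UnitAddCircle

/-- The linear skew-shift `f(x,y) = (x+α, y+x+β)` on the two-torus. -/
def skew (α β : ℝ) : T2 → T2 := fun p => (p.1 + (α : T1), p.2 + p.1 + (β : T1))

/-- Birkhoff sums `ψ_n = ∑_{k<n} ψ ∘ f^k`. -/
def birkhoff {X : Type*} (f : X → X) (ψ : X → ℝ) (n : ℕ) (p : X) : ℝ :=
  ∑ k ∈ Finset.range n, ψ (f^[k] p)

/-- Fiber average `φ^⊥(x) = ∫_T Φ(x,s) ds`. -/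
def fiberAvg (Φ : T2 → ℝ) : T1 → ℝ := fun x => ∫ s : T1, Φ (x, s)

/-- Fiber projection `φ(x,y) = Φ(x,y) - ∫_T Φ(x,s) ds`. -/
def fiberProj (Φ : T2 → ℝ) : T2 → ℝ := fun p => Φ p - ∫ s : T1, Φ (p.1, s)

/-- `ψ` is a measurable coboundary for `f`: `ψ = u∘f - u` a.e. for some measurable `u`. -/
def MeasCobound (f : T2 → T2) (ψ : T2 → ℝ) : Prop :=
  ∃ u : T2 → ℝ, Measurable u ∧ ∀ᵐ p : T2, ψ p = u (f p) - u p

/-- `g` is (real-valued and) a trigonometric polynomial of degree at most `d` on the circle. -/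
def IsTrigPolyDeg (d : ℕ) (g : T1 → ℝ) : Prop :=
  ∃ c : ℤ → ℂ, ∀ y : T1, (g y : ℂ) = ∑ k ∈ Finset.Icc (-(d : ℤ)) d, c k * fourier k y

/-- The class `P_d`: continuous functions, trigonometric polynomials of degree `≤ d` in `y`. -/
def InPd (d : ℕ) (Φ : T2 → ℝ) : Prop :=
  Continuous Φ ∧ ∀ x : T1, IsTrigPolyDeg d fun y => Φ (x, y)

/-- The class `R` of roof functions: `Φ ∈ P_d` for some `d ≥ 1` and `φ^⊥` is a
trigonometric polynomial. -/
def InR (Φ : T2 → ℝ) : Prop :=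
  (∃ d : ℕ, 1 ≤ d ∧ InPd d Φ) ∧ ∃ d' : ℕ, IsTrigPolyDeg d' (fiberAvg Φ)

/-- The hitting number `n_t(p) = max { n : Φ_n(p) < t }`. -/
def hitting (f : T2 → T2) (Φ : T2 → ℝ) (t : ℝ) (p : T2) : ℕ :=
  sSup {n : ℕ | birkhoff f Φ n p < t}

/-- Minimum of the hitting number over the arc `{x} × [a,b]`. -/
def nlowArc (f : T2 → T2) (Φ : T2 → ℝ) (t : ℝ) (x : T1) (a b : ℝ) : ℕ :=
  sInf ((fun y : ℝ => hitting f Φ t (x, (y : T1))) '' Set.Icc a b)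

/-- Maximum of the hitting number over the arc `{x} × [a,b]`. -/
def nhighArc (f : T2 → T2) (Φ : T2 → ℝ) (t : ℝ) (x : T1) (a b : ℝ) : ℕ :=
  sSup ((fun y : ℝ => hitting f Φ t (x, (y : T1))) '' Set.Icc a b)

/-- The stretch `ΔΦ_n(I) = max_{y∈[a,b]} Φ_n(x,y) − min_{y∈[a,b]} Φ_n(x,y)`. -/
def stretchArc (f : T2 → T2) (Φ : T2 → ℝ) (n : ℕ) (x : T1) (a b : ℝ) : ℝ :=
  sSup ((fun y : ℝ => birkhoff f Φ n (x, (y : T1))) '' Set.Icc a b)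
    - sInf ((fun y : ℝ => birkhoff f Φ n (x, (y : T1))) '' Set.Icc a b)


section Aux

lemma birkhoff_zero (f : T2 → T2) (Φ : T2 → ℝ) (p : T2) : birkhoff f Φ 0 p = 0 := by
  simp [birkhoff]

lemma birkhoff_split (f : T2 → T2) (Φ : T2 → ℝ) {m n : ℕ} (h : m ≤ n) (p : T2) :
    birkhoff f Φ n p = birkhoff f Φ m p + ∑ k ∈ Finset.Ico m n, Φ (f^[k] p) := by
  unfold birkhoff
  rw [Finset.sum_Ico_eq_sub _ h]; ring

lemma birkhoff_diff_ge (f : T2 → T2) (Φ : T2 → ℝ) {c : ℝ} (hΦ : ∀ p, c ≤ Φ p)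
    {m n : ℕ} (h : m ≤ n) (p : T2) :
    birkhoff f Φ m p + ((n : ℝ) - m) * c ≤ birkhoff f Φ n p := by
  have hsum : (Finset.Ico m n).card • c ≤ ∑ k ∈ Finset.Ico m n, Φ (f^[k] p) :=
    Finset.card_nsmul_le_sum _ _ _ fun k _ => hΦ _
  have hcard : (((Finset.Ico m n).card : ℕ) : ℝ) = (n : ℝ) - m := by
    rw [Nat.card_Ico, Nat.cast_sub h]
  rw [birkhoff_split f Φ h p]
  rw [nsmul_eq_mul, hcard] at hsum
  linarith

lemma birkhoff_diff_le (f : T2 → T2) (Φ : T2 → ℝ) {C : ℝ} (hΦ : ∀ p, Φ p ≤ C)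
    {m n : ℕ} (h : m ≤ n) (p : T2) :
    birkhoff f Φ n p ≤ birkhoff f Φ m p + ((n : ℝ) - m) * C := by
  have hsum : ∑ k ∈ Finset.Ico m n, Φ (f^[k] p) ≤ (Finset.Ico m n).card • C :=
    Finset.sum_le_card_nsmul _ _ _ fun k _ => hΦ _
  have hcard : (((Finset.Ico m n).card : ℕ) : ℝ) = (n : ℝ) - m := by
    rw [Nat.card_Ico, Nat.cast_sub h]
  rw [birkhoff_split f Φ h p]
  rw [nsmul_eq_mul, hcard] at hsum
  linarith

lemma birkhoff_mono (f : T2 → T2) (Φ : T2 → ℝ) {c : ℝ} (hc : 0 ≤ c) (hΦ : ∀ p, c ≤ Φ p)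
    {m n : ℕ} (h : m ≤ n) (p : T2) :
    birkhoff f Φ m p ≤ birkhoff f Φ n p := by
  have := birkhoff_diff_ge f Φ hΦ h p
  have hmn : (m : ℝ) ≤ n := Nat.cast_le.mpr h
  nlinarith

lemma hitting_ub (f : T2 → T2) (Φ : T2 → ℝ) {t lo : ℝ} (hlo : 0 < lo)
    (hΦ : ∀ p, lo ≤ Φ p) (p : T2) :
    ∀ n ∈ {n : ℕ | birkhoff f Φ n p < t}, n ≤ ⌈t / lo⌉₊ := by
  intro n hn
  have h1 := birkhoff_diff_ge f Φ hΦ (Nat.zero_le n) p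
  rw [birkhoff_zero] at h1
  have h2 : (n : ℝ) * lo < t := by
    have : (n : ℝ) * lo ≤ birkhoff f Φ n p := by simpa using h1
    exact this.trans_lt hn
  exact (Nat.lt_ceil.mpr ((lt_div_iff₀ hlo).mpr h2)).le

lemma hittingSet_bddAbove (f : T2 → T2) (Φ : T2 → ℝ) {t lo : ℝ} (hlo : 0 < lo)
    (hΦ : ∀ p, lo ≤ Φ p) (p : T2) :
    BddAbove {n : ℕ | birkhoff f Φ n p < t} :=
  ⟨⌈t / lo⌉₊, hitting_ub f Φ hlo hΦ p⟩

lemma hittingSet_mem_zero (f : T2 → T2) (Φ : T2 → ℝ) {t : ℝ} (ht : 0 < t) (p : T2) :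
    (0 : ℕ) ∈ {n : ℕ | birkhoff f Φ n p < t} := by
  simp [Set.mem_setOf_eq, birkhoff_zero, ht]

lemma hitting_lt (f : T2 → T2) (Φ : T2 → ℝ) {t lo : ℝ} (ht : 0 < t) (hlo : 0 < lo)
    (hΦ : ∀ p, lo ≤ Φ p) (p : T2) :
    birkhoff f Φ (hitting f Φ t p) p < t :=
  Nat.sSup_mem ⟨0, hittingSet_mem_zero f Φ ht p⟩ (hittingSet_bddAbove f Φ hlo hΦ p)

lemma hitting_succ_ge (f : T2 → T2) (Φ : T2 → ℝ) {t lo : ℝ} (hlo : 0 < lo)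
    (hΦ : ∀ p, lo ≤ Φ p) (p : T2) :
    t ≤ birkhoff f Φ (hitting f Φ t p + 1) p := by
  by_contra hcon
  push_neg at hcon
  have : hitting f Φ t p + 1 ≤ hitting f Φ t p :=
    le_csSup (hittingSet_bddAbove f Φ hlo hΦ p) hcon
  omega

lemma hitting_le (f : T2 → T2) (Φ : T2 → ℝ) {t lo : ℝ} (ht : 0 < t) (hlo : 0 < lo)
    (hΦ : ∀ p, lo ≤ Φ p) (p : T2) :
    hitting f Φ t p ≤ ⌈t / lo⌉₊ :=
  csSup_le ⟨0, hittingSet_mem_zero f Φ ht p⟩ (hitting_ub f Φ hlo hΦ p)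

lemma continuous_skew (α β : ℝ) : Continuous (skew α β) := by
  unfold skew
  fun_prop

lemma continuous_birkhoff_arc (α β : ℝ) (Φ : T2 → ℝ) (hΦ : Continuous Φ) (n : ℕ) (x : T1) :
    Continuous fun y : ℝ => birkhoff (skew α β) Φ n (x, (y : T1)) := by
  unfold birkhoff
  refine continuous_finset_sum _ fun k _ => ?_
  exact hΦ.comp (((continuous_skew α β).iterate k).comp
    (Continuous.prodMk continuous_const (AddCircle.continuous_mk' 1)))

end Aux

/-- Lemma: stretch controls the variation of the hitting number.
`ΔΦ_{n̲}(I)/Φ̄ − Φ̄/Φ̲ ≤ n̄_t(I) − n̲_t(I) ≤ ΔΦ_{n̲}(I)/Φ̲ + Φ̄/Φ̲`. -/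
theorem stmt5 (α β : ℝ) (Φ : T2 → ℝ) (hcont : Continuous Φ)
    (hpos : 0 < sInf (Set.range Φ)) (t : ℝ) (ht : 0 < t)
    (x : T1) (a b : ℝ) (hab : a ≤ b) (hlen : b - a < 1) :
    stretchArc (skew α β) Φ (nlowArc (skew α β) Φ t x a b) x a b / sSup (Set.range Φ)
        - sSup (Set.range Φ) / sInf (Set.range Φ)
      ≤ (nhighArc (skew α β) Φ t x a b : ℝ) - (nlowArc (skew α β) Φ t x a b : ℝ) ∧
    (nhighArc (skew α β) Φ t x a b : ℝ) - (nlowArc (skew α β) Φ t x a b : ℝ)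
      ≤ stretchArc (skew α β) Φ (nlowArc (skew α β) Φ t x a b) x a b / sInf (Set.range Φ)
        + sSup (Set.range Φ) / sInf (Set.range Φ) := by
  classical
  set f := skew α β with hf
  set lo := sInf (Set.range Φ) with hloeq
  set hi := sSup (Set.range Φ) with hhieq
  have hrange : IsCompact (Set.range Φ) := isCompact_range hcont
  have hlow : ∀ p, lo ≤ Φ p := fun p => csInf_le hrange.bddBelow ⟨p, rfl⟩
  have hhigh : ∀ p, Φ p ≤ hi := fun p => le_csSup hrange.bddAbove ⟨p, rfl⟩
  have hlohi : lo ≤ hi := (hlow ((0 : T1), (0 : T1))).trans (hhigh ((0 : T1), (0 : T1)))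
  have hhi : 0 < hi := lt_of_lt_of_le hpos hlohi
  -- the hitting function on the arc
  set g : ℝ → ℕ := fun y => hitting f Φ t (x, (y : T1)) with hg
  have habne : (Set.Icc a b).Nonempty := Set.nonempty_Icc.mpr hab
  have hAne : (g '' Set.Icc a b).Nonempty := habne.image g
  have hAbdd : BddAbove (g '' Set.Icc a b) := by
    refine ⟨⌈t / lo⌉₊, ?_⟩
    rintro n ⟨y, _, rfl⟩
    exact hitting_le f Φ ht hpos hlow _
  set n1 := nlowArc f Φ t x a b with hn1
  set n2 := nhighArc f Φ t x a b with hn2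
  have hn1mem : n1 ∈ g '' Set.Icc a b := Nat.sInf_mem hAne
  have hn2mem : n2 ∈ g '' Set.Icc a b := Nat.sSup_mem hAne hAbdd
  obtain ⟨y₁, hy₁, hy₁e⟩ := hn1mem
  obtain ⟨y₂, hy₂, hy₂e⟩ := hn2mem
  have hlowle : ∀ y ∈ Set.Icc a b, n1 ≤ g y := fun y hy => Nat.sInf_le ⟨y, hy, rfl⟩
  have hlehigh : ∀ y ∈ Set.Icc a b, g y ≤ n2 := fun y hy => le_csSup hAbdd ⟨y, hy, rfl⟩
  have hn12 : n1 ≤ n2 := hy₂e ▸ hlowle y₂ hy₂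
  -- the Birkhoff sum at level n1 on the arc
  set G : ℝ → ℝ := fun y => birkhoff f Φ n1 (x, (y : T1)) with hG
  have hGcont : Continuous G := continuous_birkhoff_arc α β Φ hcont n1 x
  have hK : IsCompact (G '' Set.Icc a b) := isCompact_Icc.image hGcont
  have hKne : (G '' Set.Icc a b).Nonempty := habne.image G
  set M := sSup (G '' Set.Icc a b) with hM
  set m := sInf (G '' Set.Icc a b) with hm
  have hstretch : stretchArc f Φ n1 x a b = M - m := rfl
  obtain ⟨yM, hyM, hyMe⟩ : M ∈ G '' Set.Icc a b := hK.sSup_mem hKne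
  obtain ⟨ym, hym, hyme⟩ : m ∈ G '' Set.Icc a b := hK.sInf_mem hKne
  have hleM : ∀ y ∈ Set.Icc a b, G y ≤ M := fun y hy => le_csSup hK.bddAbove ⟨y, hy, rfl⟩
  have hmle : ∀ y ∈ Set.Icc a b, m ≤ G y := fun y hy => csInf_le hK.bddBelow ⟨y, hy, rfl⟩
  -- key facts
  -- (a) M < t
  have hMlt : M < t := by
    rw [← hyMe]
    have h1 : G yM ≤ birkhoff f Φ (g yM) (x, (yM : T1)) :=
      birkhoff_mono f Φ hpos.le hlow (hlowle yM hyM) _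
    exact h1.trans_lt (hitting_lt f Φ ht hpos hlow _)
  -- (b) t ≤ m + (n2 + 1 - n1) * hi
  have htm : t ≤ m + ((n2 : ℝ) + 1 - n1) * hi := by
    have h1 : t ≤ birkhoff f Φ (g ym + 1) (x, (ym : T1)) := hitting_succ_ge f Φ hpos hlow _
    have h2 : birkhoff f Φ (g ym + 1) (x, (ym : T1)) ≤ birkhoff f Φ (n2 + 1) (x, (ym : T1)) :=
      birkhoff_mono f Φ hpos.le hlow (by have := hlehigh ym hym; omega) _
    have h3 : birkhoff f Φ (n2 + 1) (x, (ym : T1))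
        ≤ birkhoff f Φ n1 (x, (ym : T1)) + (((n2 + 1 : ℕ) : ℝ) - n1) * hi :=
      birkhoff_diff_le f Φ hhigh (by omega) _
    have h4 : birkhoff f Φ n1 (x, (ym : T1)) = m := hyme
    push_cast at h3
    linarith
  -- (c) (n2 - n1) * lo ≤ M - m + hi
  have hc : ((n2 : ℝ) - n1) * lo ≤ M - m + hi := by
    have h1 : birkhoff f Φ n1 (x, (y₂ : T1)) + ((n2 : ℝ) - n1) * lo
        ≤ birkhoff f Φ n2 (x, (y₂ : T1)) := birkhoff_diff_ge f Φ hlow hn12 _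
    have h2 : birkhoff f Φ n2 (x, (y₂ : T1)) < t := by
      rw [← hy₂e]; exact hitting_lt f Φ ht hpos hlow _
    have h3 : m ≤ birkhoff f Φ n1 (x, (y₂ : T1)) := hmle y₂ hy₂
    have h4 : t ≤ birkhoff f Φ (n1 + 1) (x, (y₁ : T1)) := by
      rw [← hy₁e]; exact hitting_succ_ge f Φ hpos hlow _
    have h5 : birkhoff f Φ (n1 + 1) (x, (y₁ : T1))
        ≤ birkhoff f Φ n1 (x, (y₁ : T1)) + (((n1 + 1 : ℕ) : ℝ) - n1) * hi :=
      birkhoff_diff_le f Φ hhigh (by omega) _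
    have h6 : birkhoff f Φ n1 (x, (y₁ : T1)) ≤ M := hleM y₁ hy₁
    push_cast at h5
    linarith
  rw [hstretch]
  constructor
  · -- lower bound
    have h1 : (M - m) / hi ≤ (n2 : ℝ) + 1 - n1 := by
      rw [div_le_iff₀ hhi]
      linarith
    have h2 : (1 : ℝ) ≤ hi / lo := (one_le_div hpos).mpr hlohi
    linarith
  · -- upper bound
    rw [← add_div, ← sub_le_iff_le_add'] at *
    have : ((n2 : ℝ) - n1) ≤ (M - m + hi) / lo := by
      rw [le_div_iff₀ hpos]
      linarith
    linarith [this]
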